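/- Let R be a commutative ring, r ≥ 2, λ ∈ R, and let J_r(λ) ∈ Mat_{r×r}(R) be the Jordan block with eigenvalue λ. Then the ideal I_{J_r(λ)} of R[z₁,…,z_r] equals H_r, the ideal generated by the 2×2 minors z_i z_{j+1} − z_j z_{i+1} (for 1 ≤ i < j ≤ r−1) of the 2×(r−1) matrix with rows (z₁,…,z_{r−1}) and (z₂,…,z_r), together with the monomials z_i z_r for 2 ≤ i ≤ r. -/
import Mathlib

open MvPolynomial

/-- The variable `z_{k+1}` (0-based index `k`) of `R[z₁,…,z_r]`, or `0` if `k ≥ r`. -/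
noncomputable def Zv (R : Type*) [CommRing R] (r k : ℕ) : MvPolynomial (Fin r) R :=
  if h : k < r then X ⟨k, h⟩ else 0

/-- The ideal `I_M` of `R[z₁,…,z_r]` generated by `∑ₖ z_k (M_{jk} z_i − M_{ik} z_j)`
for all pairs `i < j`. -/
noncomputable def higgsIdeal {R : Type*} [CommRing R] {r : ℕ}
    (M : Matrix (Fin r) (Fin r) R) : Ideal (MvPolynomial (Fin r) R) :=
  Ideal.span { p | ∃ i j : Fin r, i < j ∧
    p = ∑ k : Fin r, X k * (C (M j k) * X i - C (M i k) * X j) }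

/-- The `r×r` Jordan block with eigenvalue `lam`. -/
def jordanBlock (R : Type*) [CommRing R] (r : ℕ) (lam : R) : Matrix (Fin r) (Fin r) R :=
  Matrix.of fun i j => if (i : ℕ) = (j : ℕ) then lam
    else if (j : ℕ) = (i : ℕ) + 1 then 1 else 0

/-- The ideal `H_r`: the `2×2` minors `z_i z_{j+1} − z_j z_{i+1}` (`1 ≤ i < j ≤ r−1`,
here written 0-based) of the matrix with rows `(z₁,…,z_{r−1})`, `(z₂,…,z_r)`,
together with the monomials `z_i z_r` for `2 ≤ i ≤ r`. -/
noncomputable def Hideal (R : Type*) [CommRing R] (r : ℕ) : Ideal (MvPolynomial (Fin r) R) :=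
  Ideal.span ({ p | ∃ a b : ℕ, a < b ∧ b + 1 < r ∧
      p = Zv R r a * Zv R r (b + 1) - Zv R r b * Zv R r (a + 1) } ∪
    { p | ∃ a : ℕ, 1 ≤ a ∧ a < r ∧ p = Zv R r a * Zv R r (r - 1) })

lemma rowSum {R : Type*} [CommRing R] {r : ℕ} (lam : R) (j : Fin r) :
    ∑ k : Fin r, X k * C (jordanBlock R r lam j k) = C lam * X j + Zv R r ((j : ℕ) + 1) := by
  have hsplit : ∀ k : Fin r, jordanBlock R r lam j k =
      (if (j : ℕ) = (k : ℕ) then lam else 0) + (if (k : ℕ) = (j : ℕ) + 1 then 1 else 0) := by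
    intro k
    simp only [jordanBlock, Matrix.of_apply]
    split_ifs with h1 h2 <;> first | omega | ring
  calc ∑ k : Fin r, X k * C (jordanBlock R r lam j k)
      = (∑ k : Fin r, X (R := R) k * C (if (j : ℕ) = (k : ℕ) then lam else 0)) +
        ∑ k : Fin r, X k * C (if (k : ℕ) = (j : ℕ) + 1 then (1:R) else 0) := by
        rw [← Finset.sum_add_distrib]
        exact Finset.sum_congr rfl fun k _ => by rw [hsplit k, map_add]; ring
    _ = C lam * X j + Zv R r ((j : ℕ) + 1) := by
        congr 1
        · rw [Finset.sum_eq_single j]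
          · simp [mul_comm]
          · intro k _ hk
            rw [if_neg (fun h => hk (Fin.ext h.symm))]
            simp
          · simp
        · by_cases h : (j : ℕ) + 1 < r
          · rw [Zv, dif_pos h, Finset.sum_eq_single ⟨(j : ℕ) + 1, h⟩]
            · simp
            · intro k _ hk
              rw [if_neg (fun hh => hk (Fin.ext hh))]
              simp
            · simp
          · rw [Zv, dif_neg h, Finset.sum_eq_zero]
            intro k _
            rw [if_neg (by omega)]
            simp

lemma key {R : Type*} [CommRing R] {r : ℕ} (lam : R) (i j : Fin r) :
    ∑ k : Fin r, X k * (C (jordanBlock R r lam j k) * X i - C (jordanBlock R r lam i k) * X j)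
      = Zv R r i * Zv R r ((j : ℕ) + 1) - Zv R r j * Zv R r ((i : ℕ) + 1) := by
  have e : ∀ k : Fin r, X (R := R) k * (C (jordanBlock R r lam j k) * X i
      - C (jordanBlock R r lam i k) * X j)
      = (X k * C (jordanBlock R r lam j k)) * X i
        - (X k * C (jordanBlock R r lam i k)) * X j := fun k => by ring
  rw [Finset.sum_congr rfl fun k _ => e k, Finset.sum_sub_distrib,
    ← Finset.sum_mul, ← Finset.sum_mul, rowSum, rowSum]
  have hi : Zv R r (i : ℕ) = X i := by rw [Zv, dif_pos i.isLt]
  have hj : Zv R r (j : ℕ) = X j := by rw [Zv, dif_pos j.isLt]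
  rw [hi, hj]
  ring

/-- Lemma 3.3: the Higgs Grassmannian ideal of a single Jordan block equals `H_r`. -/
theorem stmt1 {R : Type*} [CommRing R] {r : ℕ} (hr : 2 ≤ r) (lam : R) :
    higgsIdeal (jordanBlock R r lam) = Hideal R r := by
  apply le_antisymm
  · rw [higgsIdeal, Ideal.span_le]
    rintro p ⟨i, j, hij, rfl⟩
    rw [key]
    by_cases h : (j : ℕ) + 1 < r
    · exact Ideal.subset_span (Or.inl ⟨i, j, hij, h, rfl⟩)
    · have hj : (j : ℕ) = r - 1 := by have := j.isLt; omega
      have hz : Zv R r ((j : ℕ) + 1) = 0 := by rw [Zv, dif_neg h]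
      have : Zv R r (i : ℕ) * Zv R r ((j : ℕ) + 1) - Zv R r (j : ℕ) * Zv R r ((i : ℕ) + 1)
          = -(Zv R r ((i : ℕ) + 1) * Zv R r (r - 1)) := by rw [hz, hj]; ring
      rw [this]
      exact (Hideal R r).neg_mem (Ideal.subset_span (Or.inr
        ⟨(i : ℕ) + 1, by omega, by have : (i : ℕ) < (j : ℕ) := hij; omega, rfl⟩))
  · rw [Hideal, Ideal.span_le]
    rintro p (⟨a, b, hab, hbr, rfl⟩ | ⟨a, ha1, har, rfl⟩)
    · have har : a < r := by omega
      have hbr' : b < r := by omega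
      refine Ideal.subset_span ⟨⟨a, har⟩, ⟨b, hbr'⟩, hab, ?_⟩
      rw [key]
    · have h1 : a - 1 < r := by omega
      have h2 : r - 1 < r := by omega
      have hlt : (⟨a - 1, h1⟩ : Fin r) < ⟨r - 1, h2⟩ := by
        simp only [Fin.mk_lt_mk]; omega
      have hmem : (∑ k : Fin r, X k * (C (jordanBlock R r lam ⟨r - 1, h2⟩ k) * X ⟨a - 1, h1⟩
            - C (jordanBlock R r lam ⟨a - 1, h1⟩ k) * X ⟨r - 1, h2⟩))
          ∈ higgsIdeal (jordanBlock R r lam) :=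
        Ideal.subset_span ⟨⟨a - 1, h1⟩, ⟨r - 1, h2⟩, hlt, rfl⟩
      rw [key] at hmem
      have hz : Zv R r ((r - 1 : ℕ) + 1) = 0 := by rw [Zv, dif_neg (by omega)]
      have hmm : Zv R r a * Zv R r (r - 1) =
          -(Zv R r ((⟨a - 1, h1⟩ : Fin r) : ℕ) * Zv R r (((⟨r - 1, h2⟩ : Fin r) : ℕ) + 1)
            - Zv R r ((⟨r - 1, h2⟩ : Fin r) : ℕ) * Zv R r (((⟨a - 1, h1⟩ : Fin r) : ℕ) + 1)) := by
        simp only []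
        have : a - 1 + 1 = a := by omega
        rw [hz, this]
        ring
      rw [hmm]
      exact (higgsIdeal (jordanBlock R r lam)).neg_mem hmem
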